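/- Let θ > 0 be real and let φ ∈ (0, π/(θ+1)). Set x = (θ^θ/(1+θ)^{1+θ}) · (sin((θ+1)φ))^{θ+1} / ( sin(φ) · (sin(θφ))^{θ} ), v = (θ sin((θ+1)φ) / ((1+θ) sin(θφ))) · e^{iφ} ∈ ℂ, and u = (1/θ) · v/(1 − v). Then u^{θ+1} = x · (1/θ + u)^{θ} · (u − 1), where w^s denotes the principal-branch complex power. -/

import Mathlib

open Complex Real

lemma mul_cpow_arg {a b : ℂ} (ha : a ≠ 0) (hb : b ≠ 0)
    (h : Complex.arg a + Complex.arg b ∈ Set.Ioc (-Real.pi) Real.pi) (s : ℂ) :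
    (a * b) ^ s = a ^ s * b ^ s := by
  rw [Complex.cpow_def_of_ne_zero (mul_ne_zero ha hb), Complex.cpow_def_of_ne_zero ha,
    Complex.cpow_def_of_ne_zero hb, Complex.log_mul ha hb h, add_mul, Complex.exp_add]

lemma sin_shift (t s : ℂ) :
    Complex.sin (t + s) * Complex.exp (s * Complex.I) - Complex.sin t
      = Complex.sin s * Complex.exp ((t + s) * Complex.I) := by
  simp only [Complex.sin]
  rw [show -(t+s)*Complex.I = -(t*Complex.I) + -(s*Complex.I) from by ring,
    show (t+s)*Complex.I = t*Complex.I + s*Complex.I from by ring,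
    show -t*Complex.I = -(t*Complex.I) from by ring,
    show -s*Complex.I = -(s*Complex.I) from by ring,
    Complex.exp_add, Complex.exp_add, Complex.exp_neg, Complex.exp_neg]
  have ht := Complex.exp_ne_zero (t * Complex.I)
  have hs := Complex.exp_ne_zero (s * Complex.I)
  field_simp
  ring

set_option maxHeartbeats 2000000 in
/-- the saddle point equation `u^{θ+1} = x (1/θ + u)^θ (u − 1)` for the
Jacobi Muttalib–Borodin ensemble, with the trigonometric parametrisation of `x`, `v`, `u`. -/
theorem stmt_14 (θ : ℝ) (hθ : 0 < θ) (φ : ℝ) (hφ : φ ∈ Set.Ioo 0 (Real.pi / (θ + 1)))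
    (x : ℝ)
    (hx : x = θ ^ θ / (1 + θ) ^ (1 + θ) *
      (Real.sin ((θ + 1) * φ) ^ (θ + 1) / (Real.sin φ * Real.sin (θ * φ) ^ θ)))
    (v : ℂ)
    (hv : v = ((θ * Real.sin ((θ + 1) * φ) / ((1 + θ) * Real.sin (θ * φ)) : ℝ) : ℂ) *
      Complex.exp (Complex.I * (φ : ℂ)))
    (u : ℂ) (hu : u = (1 / (θ : ℂ)) * (v / (1 - v))) :
    u ^ ((θ : ℂ) + 1) = (x : ℂ) * (1 / (θ : ℂ) + u) ^ (θ : ℂ) * (u - 1) := by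
  obtain ⟨hφ0, hφ1⟩ := hφ
  have hθ1 : (0:ℝ) < θ + 1 := by linarith
  have hπ := Real.pi_pos
  have hφπ : (θ + 1) * φ < Real.pi := by
    rw [lt_div_iff₀ hθ1] at hφ1; nlinarith
  have hφltπ : φ < Real.pi := by nlinarith
  have hS1 : 0 < Real.sin φ := Real.sin_pos_of_pos_of_lt_pi hφ0 hφltπ
  have hST : 0 < Real.sin (θ*φ) := Real.sin_pos_of_pos_of_lt_pi (by positivity) (by nlinarith)
  have hST1 : 0 < Real.sin ((θ+1)*φ) := Real.sin_pos_of_pos_of_lt_pi (by positivity) hφπ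
  set S1 := Real.sin φ with hS1d
  set ST := Real.sin (θ*φ) with hSTd
  set ST1 := Real.sin ((θ+1)*φ) with hST1d
  set r : ℝ := θ * ST1 / ((1+θ)*ST) with hrd
  have hr : 0 < r := by positivity
  have hθC : (θ:ℂ) ≠ 0 := Complex.ofReal_ne_zero.2 hθ.ne'
  have hexp_arg : ∀ ψ:ℝ, ψ ∈ Set.Ioc (-Real.pi) Real.pi →
      Complex.arg (Complex.exp (Complex.I * ψ)) = ψ := by
    intro ψ hψ
    rw [mul_comm, Complex.exp_mul_I]
    exact Complex.arg_cos_add_sin_mul_I hψ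
  have hφIoc : φ ∈ Set.Ioc (-Real.pi) Real.pi := ⟨by linarith, hφltπ.le⟩
  have harg_v : v.arg = φ := by
    rw [hv, Complex.arg_real_mul _ hr, hexp_arg φ hφIoc]
  have hv_ne : v ≠ 0 := by
    rw [hv]; exact mul_ne_zero (Complex.ofReal_ne_zero.2 hr.ne') (Complex.exp_ne_zero _)
  have him_v : v.im = r * S1 := by
    rw [hv, mul_comm Complex.I, Complex.mul_im, Complex.exp_ofReal_mul_I_im,
      Complex.ofReal_re, Complex.ofReal_im, zero_mul, add_zero]
  have him1v : ((1:ℂ) - v).im = -(r*S1) := by simp [Complex.sub_im, him_v]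
  have h1v_ne : (1:ℂ) - v ≠ 0 := by
    intro h
    rw [h, Complex.zero_im] at him1v
    nlinarith
  set β := Complex.arg (1 - v) with hβd
  have hβ_neg : β < 0 := Complex.arg_neg_iff.2 (by rw [him1v]; nlinarith)
  have hβ_lb : -Real.pi < β := Complex.neg_pi_lt_arg _
  -- lower bound on β
  have hβ_gt : φ - Real.pi < β := by
    have hprod : ((1:ℂ) - v) * Complex.exp (Complex.I*((Real.pi - φ:ℝ):ℂ)) =
        Complex.exp (Complex.I*((Real.pi - φ:ℝ):ℂ)) + (r:ℂ) := by
      rw [hv]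
      have h2 : Complex.exp (Complex.I*(φ:ℂ)) * Complex.exp (Complex.I*((Real.pi - φ:ℝ):ℂ))
          = -1 := by
        rw [← Complex.exp_add, ← Complex.exp_pi_mul_I]
        congr 1
        push_cast
        ring
      calc ((1:ℂ) - ↑r * Complex.exp (Complex.I*(φ:ℂ))) * Complex.exp (Complex.I*((Real.pi - φ:ℝ):ℂ))
          = Complex.exp (Complex.I*((Real.pi - φ:ℝ):ℂ))
            - ↑r * (Complex.exp (Complex.I*(φ:ℂ)) * Complex.exp (Complex.I*((Real.pi - φ:ℝ):ℂ))) := by ring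
        _ = _ := by rw [h2]; ring
    have hpolar : ((1:ℂ) - v) = (‖1-v‖ : ℂ) * Complex.exp (β * Complex.I) :=
      (Complex.norm_mul_exp_arg_mul_I _).symm
    have habs : 0 < ‖1-v‖ := norm_pos_iff.2 h1v_ne
    have him : (((1:ℂ) - v) * Complex.exp (Complex.I*((Real.pi - φ:ℝ):ℂ))).im
        = ‖1-v‖ * Real.sin (β + (Real.pi - φ)) := by
      conv_lhs => rw [hpolar, mul_assoc, ← Complex.exp_add]
      rw [show (β:ℂ) * Complex.I + Complex.I*((Real.pi - φ:ℝ):ℂ)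
          = ((β + (Real.pi - φ):ℝ):ℂ) * Complex.I from by push_cast; ring]
      rw [Complex.mul_im, Complex.exp_ofReal_mul_I_im, Complex.ofReal_re, Complex.ofReal_im,
        zero_mul, add_zero]
    have him2 : (((1:ℂ) - v) * Complex.exp (Complex.I*((Real.pi - φ:ℝ):ℂ))).im
        = Real.sin (Real.pi - φ) := by
      rw [hprod, mul_comm Complex.I, Complex.add_im, Complex.exp_ofReal_mul_I_im,
        Complex.ofReal_im, add_zero]
    have hsinpos : 0 < Real.sin (β + (Real.pi - φ)) := by
      rw [him2, Real.sin_pi_sub] at him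
      nlinarith
    by_contra hc
    push_neg at hc
    have : Real.sin (β + (Real.pi - φ)) ≤ 0 :=
      Real.sin_nonpos_of_nonpos_of_neg_pi_le (by linarith) (by linarith)
    linarith
  -- w
  set w : ℂ := (1/(θ:ℂ)) * ((1:ℂ) - v)⁻¹ with hwd
  have hw : 1/(θ:ℂ) + u = w := by
    rw [hu, hwd]
    field_simp
    ring
  have hw_ne : w ≠ 0 := mul_ne_zero (by simpa using hθC) (inv_ne_zero h1v_ne)
  have harg_w : w.arg = -β := by
    rw [hwd, show (1/(θ:ℂ)) = ((θ⁻¹:ℝ):ℂ) from by push_cast; ring,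
      Complex.arg_real_mul _ (by positivity), Complex.arg_inv,
      if_neg (show ¬ ((1:ℂ)-v).arg = Real.pi from by
        rw [← hβd]; intro h; rw [h] at hβ_neg; linarith)]
  have huvw : u = v * w := by
    rw [hu, hwd]
    field_simp
  have hu_ne : u ≠ 0 := by rw [huvw]; exact mul_ne_zero hv_ne hw_ne
  have hsplit : u ^ (θ:ℂ) = v ^ (θ:ℂ) * w ^ (θ:ℂ) := by
    rw [huvw]
    exact mul_cpow_arg hv_ne hw_ne
      (by rw [harg_v, harg_w]; constructor <;> [linarith; linarith]) _
  -- v^θ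
  have hvθ : v ^ (θ:ℂ) = ((r ^ θ : ℝ):ℂ) * Complex.exp ((θ:ℂ) * (Complex.I*(φ:ℂ))) := by
    rw [hv]
    rw [mul_cpow_arg (Complex.ofReal_ne_zero.2 hr.ne') (Complex.exp_ne_zero _)
      (by rw [Complex.arg_ofReal_of_nonneg hr.le, hexp_arg φ hφIoc, zero_add]; exact hφIoc) _]
    rw [← Complex.ofReal_cpow hr.le, Complex.cpow_def_of_ne_zero (Complex.exp_ne_zero _),
      Complex.log_exp (by simp; linarith) (by simp; linarith), mul_comm (Complex.I*(φ:ℂ))]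
  -- real key identity
  have keyR : r ^ (θ+1) = x * θ * S1 / ST := by
    rw [hx, hrd]
    rw [Real.div_rpow (by positivity) (by positivity),
      Real.mul_rpow hθ.le hST1.le, Real.mul_rpow (by positivity) hST.le,
      Real.rpow_add_one hθ.ne', Real.rpow_add_one hST.ne',
      show (1:ℝ)+θ = θ+1 from by ring]
    field_simp
  have hSTne : (ST:ℂ) ≠ 0 := Complex.ofReal_ne_zero.2 hST.ne'
  have h1θ : (1:ℂ) + (θ:ℂ) ≠ 0 := by
    intro h
    have : (1:ℝ) + θ = 0 := by exact_mod_cast h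
    linarith
  have hu2 : u = v / ((θ:ℂ) * (1 - v)) := by
    rw [hu]; field_simp
  have hu1 : u - 1 = ((1 + (θ:ℂ)) * v - θ) / ((θ:ℂ) * (1 - v)) := by
    rw [hu]; field_simp; ring
  have hv2 : (1 + (θ:ℂ)) * v - θ
      = (θ:ℂ) * ↑S1 * Complex.exp (Complex.I * (((θ+1)*φ:ℝ):ℂ)) / ↑ST := by
    have c1 : ((ST1:ℝ):ℂ) = Complex.sin ((θ:ℂ)*φ + φ) := by
      rw [hST1d, Complex.ofReal_sin]; congr 1; push_cast; ring
    have c2 : ((ST:ℝ):ℂ) = Complex.sin ((θ:ℂ)*φ) := by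
      rw [hSTd, Complex.ofReal_sin]; congr 1; push_cast; ring
    have c3 : ((S1:ℝ):ℂ) = Complex.sin ((φ:ℝ):ℂ) := by rw [hS1d, Complex.ofReal_sin]
    have trigR : ((ST1:ℝ):ℂ) * Complex.exp (Complex.I*(φ:ℂ)) - ((ST:ℝ):ℂ)
        = ((S1:ℝ):ℂ) * Complex.exp (Complex.I*(((θ+1)*φ:ℝ):ℂ)) := by
      rw [c1, c2, c3,
        show Complex.I * ((φ:ℝ):ℂ) = ((φ:ℝ):ℂ) * Complex.I from by ring,
        show Complex.I * ((((θ+1)*φ:ℝ)):ℂ) = ((θ:ℂ)*φ + φ)*Complex.I from by push_cast; ring]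
      exact sin_shift _ _
    rw [hv, hrd, Complex.ofReal_div, Complex.ofReal_mul, Complex.ofReal_mul,
      Complex.ofReal_add, Complex.ofReal_one]
    field_simp [h1θ, hSTne]
    linear_combination trigR
  have hexpadd : Complex.exp ((θ:ℂ)*(Complex.I*(φ:ℂ))) * Complex.exp (Complex.I*(φ:ℂ))
      = Complex.exp (Complex.I * (((θ+1)*φ:ℝ):ℂ)) := by
    rw [← Complex.exp_add]; congr 1; push_cast; ring
  have hrr : ((r^θ:ℝ):ℂ) * (r:ℂ) = ((x * θ * S1 / ST : ℝ):ℂ) := by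
    have : r^θ * r = x*θ*S1/ST := by rw [← Real.rpow_add_one hr.ne']; exact keyR
    exact_mod_cast congrArg (fun t : ℝ => (t:ℂ)) this
  have h' : v ^ (θ:ℂ) * v = ↑x * ((1 + (θ:ℂ)) * v - θ) := by
    rw [hv2, hvθ]
    conv_lhs => rw [hv]
    calc ((r^θ:ℝ):ℂ) * Complex.exp ((θ:ℂ)*(Complex.I*(φ:ℂ))) * ((r:ℂ) * Complex.exp (Complex.I*(φ:ℂ)))
        = (((r^θ:ℝ):ℂ) * (r:ℂ)) * (Complex.exp ((θ:ℂ)*(Complex.I*(φ:ℂ))) * Complex.exp (Complex.I*(φ:ℂ))) := by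
          ring
      _ = ((x * θ * S1 / ST : ℝ):ℂ) * Complex.exp (Complex.I * (((θ+1)*φ:ℝ):ℂ)) := by
          rw [hrr, hexpadd]
      _ = ↑x * ((θ:ℂ) * ↑S1 * Complex.exp (Complex.I * (((θ+1)*φ:ℝ):ℂ)) / ↑ST) := by
          push_cast
          ring
  have hwθ : w ^ (θ:ℂ) ≠ 0 := by
    rw [Complex.cpow_def_of_ne_zero hw_ne]; exact Complex.exp_ne_zero _
  have h : v ^ (θ:ℂ) * u = ↑x * (u - 1) := by
    rw [hu1, hu2, ← mul_div_assoc, h', mul_div_assoc]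
  rw [hw, Complex.cpow_add _ _ hu_ne, Complex.cpow_one, hsplit]
  linear_combination (w ^ (θ:ℂ)) * h
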